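/- arXiv:0906.1840 — 3 statements merged into one kernel-verified Lean document; each statement's English description precedes it below -/
import Mathlib

section
/- Let d ≥ 3 and let Y₁,...,Yₙ be independent with Yᵢ ~ Exp((d-2)i + d), and T = ∑ᵢ Yᵢ. Then for any q ≥ n and ℓ > 0, P(T ≥ (1/(d-2))·log q + ℓ) ≤ C·e^{-dℓ} for a constant C depending only on d (one may take C = e^{2d/(d-2)} · q^{d/(d-2)} / q^{d/(d-2)}, i.e., C = e^{2d/(d-2)}). -/
open MeasureTheory ProbabilityTheory Real
section AuxTB
open Set

lemma expMeasure_eq (r : ℝ) :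
    expMeasure r = volume.withDensity fun x => ((exponentialPDFReal r x).toNNReal : ENNReal) := rfl

lemma pdf_indicator {r t : ℝ} (hr : 0 < r) :
    (fun x => Real.exp (t * x) * (((exponentialPDFReal r x).toNNReal : ENNReal)).toReal)
      = Set.indicator (Ici 0) (fun x => r * Real.exp (-(r - t) * x)) := by
  ext x
  rw [ENNReal.coe_toReal, Real.coe_toNNReal _ (exponentialPDFReal_nonneg hr x)]
  by_cases hx : (0:ℝ) ≤ x
  · rw [Set.indicator_of_mem (Set.mem_Ici.mpr hx), exponentialPDFReal, gammaPDFReal, if_pos hx]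
    simp only [Real.Gamma_one, rpow_one]
    rw [div_one, sub_self, rpow_zero, mul_one]
    rw [mul_comm, mul_assoc, ← Real.exp_add]
    ring_nf
  · rw [Set.indicator_of_notMem (by simpa using hx), exponentialPDFReal, gammaPDFReal, if_neg hx,
      mul_zero]

lemma aux_integrable_exp_mul {r t : ℝ} (hr : 0 < r) (ht : t < r) :
    Integrable (fun x => Real.exp (t * x)) (expMeasure r) := by
  rw [expMeasure_eq, integrable_withDensity_iff
    ((measurable_exponentialPDFReal r).real_toNNReal.coe_nnreal_ennreal)
    (Filter.Eventually.of_forall fun x => ENNReal.coe_lt_top)]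
  rw [pdf_indicator hr, integrable_indicator_iff measurableSet_Ici]
  refine Integrable.const_mul ?_ r
  have := (exp_neg_integrableOn_Ioi 0 (by linarith : (0:ℝ) < r - t))
  rwa [← integrableOn_Ici_iff_integrableOn_Ioi] at this

lemma aux_integral_exp_mul {r t : ℝ} (hr : 0 < r) (ht : t < r) :
    ∫ x, Real.exp (t * x) ∂(expMeasure r) = r / (r - t) := by
  rw [expMeasure_eq, integral_withDensity_eq_integral_smul
    (measurable_exponentialPDFReal r).real_toNNReal]
  have : (fun x => (exponentialPDFReal r x).toNNReal • Real.exp (t * x))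
      = Set.indicator (Ici 0) (fun x => r * Real.exp (-(r - t) * x)) := by
    have := pdf_indicator (t := t) hr
    rw [← this]
    ext x
    rw [NNReal.smul_def, smul_eq_mul, ENNReal.coe_toReal, mul_comm]
  rw [this, integral_indicator measurableSet_Ici,
    MeasureTheory.integral_Ici_eq_integral_Ioi, integral_const_mul]
  have hb : (0:ℝ) < r - t := by linarith
  have := integral_comp_mul_left_Ioi (fun u => Real.exp (-u)) 0 hb
  simp only [mul_zero] at this
  rw [show (fun a => rexp (-(r - t) * a)) = fun a => rexp (-((r - t) * a)) by
    ext a; ring_nf, this, integral_exp_neg_Ioi_zero, smul_eq_mul, mul_one]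
  field_simp

lemma harm_le : ∀ n : ℕ, 1 ≤ n → ∑ i ∈ Finset.Icc 1 n, (1:ℝ)/i ≤ 1 + Real.log n := by
  intro n hn
  induction n, hn using Nat.le_induction with
  | base => simp
  | succ n hn ih =>
    rw [Finset.sum_Icc_succ_top (by omega : 1 ≤ n + 1)]
    have hn0 : (0:ℝ) < n := by exact_mod_cast hn
    have hn1 : (0:ℝ) < (n:ℝ) + 1 := by linarith
    have key : (1:ℝ)/((n:ℕ)+1 : ℕ) ≤ Real.log ((n:ℕ)+1 : ℕ) - Real.log n := by
      push_cast
      have h := Real.log_le_sub_one_of_pos (x := (n:ℝ)/((n:ℝ)+1)) (by positivity)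
      rw [Real.log_div (ne_of_gt hn0) (ne_of_gt hn1)] at h
      have : (n:ℝ)/((n:ℝ)+1) - 1 = -(1/((n:ℝ)+1)) := by field_simp; ring
      rw [this] at h
      linarith
    push_cast at key ⊢
    linarith

end AuxTB

/-- For independent `Yᵢ ~ Exp((d-2)i + d)`, `1 ≤ i ≤ n`, and `T = ∑ᵢ Yᵢ`:
for any `q ≥ n` and `ℓ > 0`, `P(T ≥ (1/(d-2)) log q + ℓ) ≤ C e^{-dℓ}`
with `C = e^{2d/(d-2)}`. -/
theorem tail_bound_exploration_time
    {Ω : Type*} [MeasurableSpace Ω] (μ : Measure Ω) [IsProbabilityMeasure μ]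
    (d : ℕ) (hd : 3 ≤ d) (n : ℕ) (hn : 1 ≤ n) (Y : ℕ → Ω → ℝ)
    (hmeas : ∀ i, Measurable (Y i))
    (hindep : iIndepFun Y μ)
    (hdist : ∀ i ∈ Finset.Icc 1 n, Measure.map (Y i) μ = expMeasure (((d : ℝ) - 2) * i + d))
    (q : ℝ) (hq : (n : ℝ) ≤ q) (ℓ : ℝ) (hℓ : 0 < ℓ) :
    μ {ω | (1 / ((d : ℝ) - 2)) * Real.log q + ℓ ≤ ∑ i ∈ Finset.Icc 1 n, Y i ω}
      ≤ ENNReal.ofReal (Real.exp (2 * d / ((d : ℝ) - 2)) * Real.exp (-(d : ℝ) * ℓ)) := by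
  have hc : (1:ℝ) ≤ (d:ℝ) - 2 := by
    have : (3:ℝ) ≤ d := by exact_mod_cast hd
    linarith
  have hd0 : (0:ℝ) < d := by positivity
  set c : ℝ := (d:ℝ) - 2 with hcdef
  -- facts about rates
  have hrpos : ∀ i ∈ Finset.Icc 1 n, (0:ℝ) < c * i + d := by
    intro i hi
    have : (1:ℝ) ≤ i := by exact_mod_cast (Finset.mem_Icc.mp hi).1
    nlinarith
  have hdlt : ∀ i ∈ Finset.Icc 1 n, (d:ℝ) < c * i + d := by
    intro i hi
    have : (1:ℝ) ≤ i := by exact_mod_cast (Finset.mem_Icc.mp hi).1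
    nlinarith
  -- integrability of exp (d * Y i)
  have hint : ∀ i ∈ Finset.Icc 1 n, Integrable (fun ω => rexp ((d:ℝ) * Y i ω)) μ := by
    intro i hi
    have h1 : Integrable (fun x => rexp ((d:ℝ) * x)) (Measure.map (Y i) μ) := by
      rw [hdist i hi]
      exact aux_integrable_exp_mul (hrpos i hi) (hdlt i hi)
    rwa [integrable_map_measure
      ((by fun_prop : Measurable fun x : ℝ => rexp ((d:ℝ) * x))).aestronglyMeasurable
      (hmeas i).aemeasurable] at h1
  -- mgf of each Y i
  have hmgf : ∀ i ∈ Finset.Icc 1 n,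
      mgf (Y i) μ (d:ℝ) = (c * i + d) / (c * i) := by
    intro i hi
    have hmap := integral_map (μ := μ) (φ := Y i) (hmeas i).aemeasurable
      (f := fun x => rexp ((d:ℝ) * x))
      ((by fun_prop : Measurable fun x : ℝ => rexp ((d:ℝ) * x))).aestronglyMeasurable
    rw [hdist i hi, aux_integral_exp_mul (hrpos i hi) (hdlt i hi)] at hmap
    rw [mgf, ← hmap]
    ring_nf
  -- chernoff
  set a : ℝ := 1 / c * Real.log q + ℓ with hadef
  have hX : Integrable (fun ω => rexp ((d:ℝ) * (∑ i ∈ Finset.Icc 1 n, Y i) ω)) μ :=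
    hindep.integrable_exp_mul_sum hmeas hint
  have hcher := measure_ge_le_exp_mul_mgf (X := ∑ i ∈ Finset.Icc 1 n, Y i) (μ := μ)
    (t := (d:ℝ)) a (le_of_lt hd0) hX
  rw [hindep.mgf_sum hmeas] at hcher
  -- bound the product
  have hnq : Real.log n ≤ Real.log q := Real.log_le_log (by exact_mod_cast hn) hq
  have hprod : ∏ i ∈ Finset.Icc 1 n, mgf (Y i) μ (d:ℝ)
      ≤ rexp ((d:ℝ) / c * (1 + Real.log n)) := by
    calc ∏ i ∈ Finset.Icc 1 n, mgf (Y i) μ (d:ℝ)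
        ≤ ∏ i ∈ Finset.Icc 1 n, rexp ((d:ℝ) / c * (1 / i)) := by
          refine Finset.prod_le_prod ?_ ?_
          · intro i hi
            rw [hmgf i hi]
            positivity
          · intro i hi
            rw [hmgf i hi]
            have hi1 : (1:ℝ) ≤ i := by exact_mod_cast (Finset.mem_Icc.mp hi).1
            have hci : (0:ℝ) < c * i := by nlinarith
            have heq : (c * i + d) / (c * i) = (d:ℝ) / c * (1 / i) + 1 := by
              field_simp
              ring
            rw [heq]
            exact Real.add_one_le_exp _
      _ = rexp ((d:ℝ) / c * ∑ i ∈ Finset.Icc 1 n, (1:ℝ)/i) := by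
          rw [← Real.exp_sum, ← Finset.mul_sum]
      _ ≤ rexp ((d:ℝ) / c * (1 + Real.log n)) := by
          apply Real.exp_le_exp.mpr
          have hsum := harm_le n hn
          have hdc : (0:ℝ) ≤ (d:ℝ)/c := by positivity
          exact mul_le_mul_of_nonneg_left hsum hdc
  -- combine
  have hfinal : rexp (-(d:ℝ) * a) * ∏ i ∈ Finset.Icc 1 n, mgf (Y i) μ (d:ℝ)
      ≤ rexp (2 * d / c) * rexp (-(d:ℝ) * ℓ) := by
    calc rexp (-(d:ℝ) * a) * ∏ i ∈ Finset.Icc 1 n, mgf (Y i) μ (d:ℝ)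
        ≤ rexp (-(d:ℝ) * a) * rexp ((d:ℝ) / c * (1 + Real.log n)) := by
          exact mul_le_mul_of_nonneg_left hprod (le_of_lt (Real.exp_pos _))
      _ ≤ rexp (2 * d / c) * rexp (-(d:ℝ) * ℓ) := by
          rw [← Real.exp_add, ← Real.exp_add]
          apply Real.exp_le_exp.mpr
          rw [hadef]
          have hc0 : (0:ℝ) < c := by linarith
          have expand : -(d:ℝ) * (1 / c * Real.log q + ℓ) + (d:ℝ)/c * (1 + Real.log n)
              = (d:ℝ)/c * (1 + Real.log n - Real.log q) - d * ℓ := by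
            field_simp
            ring
          rw [expand]
          have h1 : (d:ℝ)/c * (1 + Real.log n - Real.log q) ≤ (d:ℝ)/c * 2 := by
            apply mul_le_mul_of_nonneg_left (by linarith) (by positivity)
          have : (d:ℝ)/c * 2 = 2 * d / c := by ring
          linarith [h1, this ▸ h1]
  -- from toReal bound to ENNReal bound
  have hset : {ω | 1 / c * Real.log q + ℓ ≤ ∑ i ∈ Finset.Icc 1 n, Y i ω}
      = {ω | a ≤ (∑ i ∈ Finset.Icc 1 n, Y i) ω} := by
    ext ω
    simp [hadef, Finset.sum_apply]
  rw [hset]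
  have hne : μ {ω | a ≤ (∑ i ∈ Finset.Icc 1 n, Y i) ω} ≠ ⊤ := measure_ne_top _ _
  rw [← ENNReal.ofReal_toReal hne]
  exact ENNReal.ofReal_le_ofReal (le_trans hcher hfinal)
end

section
/- Let 0 < ε < 1/2 and μ = 1 - ε. For every integer k ≥ ⌈1/ε⌉, there exist constants 0 < c₁ ≤ c₂ (independent of ε and k, valid for all ε small enough) such that c₁ · ε · e^{-2kε} ≤ ((1/μ) - 1)/((1/μ)^{k+1} - 1) ≤ c₂ · ε · e^{-kε}. -/
open Real

/-- For `μ = 1 - ε` and `k ≥ ⌈1/ε⌉`, the reciprocal resistance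
`((1/μ)-1)/((1/μ)^{k+1}-1)` is of order `ε·e^{-kε}`: there are constants
`0 < c₁ ≤ c₂`, valid for all small enough `ε`, with
`c₁ ε e^{-2kε} ≤ ((1/μ)-1)/((1/μ)^{k+1}-1) ≤ c₂ ε e^{-kε}`. -/
theorem reciprocal_resistance_order :
    ∃ c₁ c₂ ε₀ : ℝ, 0 < c₁ ∧ c₁ ≤ c₂ ∧ 0 < ε₀ ∧
      ∀ ε : ℝ, 0 < ε → ε < 1 / 2 → ε < ε₀ →
        ∀ k : ℕ, (⌈1 / ε⌉₊ : ℕ) ≤ k →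
          c₁ * ε * Real.exp (-2 * k * ε)
              ≤ (1 / (1 - ε) - 1) / ((1 / (1 - ε)) ^ (k + 1) - 1) ∧
            (1 / (1 - ε) - 1) / ((1 / (1 - ε)) ^ (k + 1) - 1)
              ≤ c₂ * ε * Real.exp (-(k : ℝ) * ε) := by
  refine ⟨1, 2, 1, one_pos, one_le_two, one_pos, ?_⟩
  intro ε hε hε2 _ k hk
  have ha : 0 < 1 - ε := by linarith
  have ha1 : 1 - ε < 1 := by linarith
  -- k*ε ≥ 1
  have hkε : 1 ≤ (k : ℝ) * ε := by
    have h1 : (1 / ε : ℝ) ≤ (⌈1 / ε⌉₊ : ℝ) := Nat.le_ceil _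
    have h2 : ((⌈1 / ε⌉₊ : ℕ) : ℝ) ≤ (k : ℝ) := Nat.cast_le.mpr hk
    have h3 : 1 / ε ≤ (k : ℝ) := by linarith
    have : (1 / ε) * ε ≤ (k : ℝ) * ε := by nlinarith
    rwa [one_div, inv_mul_cancel₀ (ne_of_gt hε)] at this
  -- 1 - ε ≤ exp(-ε)
  have hexp : 1 - ε ≤ Real.exp (-ε) := by
    have := Real.add_one_le_exp (-ε); linarith
  -- (1-ε)^k ≤ exp(-kε)
  have hakk : (1 - ε) ^ k ≤ Real.exp (-(k : ℝ) * ε) := by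
    calc (1 - ε) ^ k ≤ Real.exp (-ε) ^ k := pow_le_pow_left₀ ha.le hexp k
      _ = Real.exp (-(k : ℝ) * ε) := by rw [← Real.exp_nat_mul]; ring_nf
  -- exp(-2ε) ≤ 1 - ε
  have hexp2 : Real.exp (-(2 * ε)) ≤ 1 - ε := by
    have h1 : 1 + 2 * ε ≤ Real.exp (2 * ε) := by
      have := Real.add_one_le_exp (2 * ε); linarith
    have hmul : Real.exp (-(2 * ε)) * Real.exp (2 * ε) = 1 := by
      rw [← Real.exp_add]; norm_num
    nlinarith [Real.exp_pos (-(2 * ε)), Real.exp_pos (2 * ε)]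
  -- exp(-2kε) ≤ (1-ε)^k
  have hlow : Real.exp (-2 * (k : ℝ) * ε) ≤ (1 - ε) ^ k := by
    calc Real.exp (-2 * (k : ℝ) * ε) = Real.exp (-(2 * ε)) ^ k := by
          rw [← Real.exp_nat_mul]; ring_nf
      _ ≤ (1 - ε) ^ k := pow_le_pow_left₀ (Real.exp_pos _).le hexp2 k
  -- (1-ε)^(k+1) ≤ 1/2
  have hak_half : (1 - ε) ^ (k + 1) ≤ 1 / 2 := by
    have h1 : (1 - ε) ^ (k + 1) ≤ Real.exp (-ε) ^ (k + 1) :=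
      pow_le_pow_left₀ ha.le hexp _
    have h2 : Real.exp (-ε) ^ (k + 1) = Real.exp (-((k : ℝ) + 1) * ε) := by
      rw [← Real.exp_nat_mul]; push_cast; ring_nf
    have h3 : Real.exp (-((k : ℝ) + 1) * ε) ≤ Real.exp (-1) := by
      apply Real.exp_le_exp.mpr; nlinarith
    have h4 : Real.exp (-1) ≤ 1 / 2 := by
      have hgt := Real.exp_one_gt_d9
      have hmul : Real.exp (-1) * Real.exp 1 = 1 := by
        rw [← Real.exp_add]; norm_num
      nlinarith [Real.exp_pos (-1)]
    linarith
  have hakpos : 0 < (1 - ε) ^ (k + 1) := pow_pos ha (k + 1)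
  have hD : 0 < 1 - (1 - ε) ^ (k + 1) := by linarith
  have hDhalf : 1 / 2 ≤ 1 - (1 - ε) ^ (k + 1) := by linarith
  have hD1 : 1 - (1 - ε) ^ (k + 1) ≤ 1 := by linarith
  -- rewrite the quantity
  have hane : (1 - ε) ≠ 0 := ne_of_gt ha
  have hdenne : (1 / (1 - ε)) ^ (k + 1) - 1 ≠ 0 := by
    have h1 : (1 : ℝ) < 1 / (1 - ε) := one_lt_one_div ha ha1
    have h2 : (1 : ℝ) < (1 / (1 - ε)) ^ (k + 1) := one_lt_pow₀ h1 (Nat.succ_ne_zero k)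
    linarith
  have hQ : (1 / (1 - ε) - 1) / ((1 / (1 - ε)) ^ (k + 1) - 1)
      = ε * (1 - ε) ^ k / (1 - (1 - ε) ^ (k + 1)) := by
    rw [div_eq_div_iff hdenne (ne_of_gt hD)]
    field_simp
    have e1 : (1 - ε)⁻¹ ^ k * (1 - ε) ^ k = 1 := by
      rw [← mul_pow, inv_mul_cancel₀ hane, one_pow]
    have e2 : (1 - ε)⁻¹ * (1 - ε) = 1 := inv_mul_cancel₀ hane
    linear_combination (-ε * ((1 - ε)⁻¹ ^ k * (1 - ε) ^ k)) * e2 + (-ε) * e1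
  rw [hQ]
  have hapk : 0 ≤ (1 - ε) ^ k := (pow_pos ha k).le
  set D := 1 - (1 - ε) ^ (k + 1) with hDdef
  constructor
  · rw [one_mul, le_div_iff₀ hD]
    calc ε * Real.exp (-2 * (k : ℝ) * ε) * D
        ≤ ε * Real.exp (-2 * (k : ℝ) * ε) * 1 :=
          mul_le_mul_of_nonneg_left hD1 (by positivity)
      _ = ε * Real.exp (-2 * (k : ℝ) * ε) := mul_one _
      _ ≤ ε * (1 - ε) ^ k := mul_le_mul_of_nonneg_left hlow hε.le
  · rw [div_le_iff₀ hD]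
    calc ε * (1 - ε) ^ k
        ≤ ε * Real.exp (-(k : ℝ) * ε) := mul_le_mul_of_nonneg_left hakk hε.le
      _ = 2 * ε * Real.exp (-(k : ℝ) * ε) * (1 / 2) := by ring
      _ ≤ 2 * ε * Real.exp (-(k : ℝ) * ε) * D :=
          mul_le_mul_of_nonneg_left hDhalf (by positivity)
end

section
/- Let Y be a random variable taking values y ≥ 3 with P(Y = 3) = 3N₃'/D and P(Y = k) = kN_k/D for k ≥ 4, where D = 3N₃' + ∑_{j≥4} jN_j, and suppose N_k ≤ c(3ε)^k n / k! for all k ≥ 4 and N₃' ≥ (4 - o(1))ε³n/3 · 3, i.e., 3N₃' ≥ (4-o(1))ε³n. Then there is a constant c' > 1 such that P(Y - 2 = k) ≤ c'(3ε)^{k-1}/(k+1)! for all k ≥ 2, and consequently E[e^{λ(Y-2)}] ≤ c'·e^{λ}·exp(3ε·e^{λ}) for all λ > 0. -/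
open MeasureTheory ProbabilityTheory Real

/-- For the degree distribution `P(Y=3) = 3N₃'/D`, `P(Y=k) = kN_k/D` (`k ≥ 4`) with
`D = 3N₃' + ∑_{j≥4} jN_j`, if `N_k ≤ c(3ε)^k n/k!` for `k ≥ 4` and `3N₃' ≥ 3ε³n`, then
there is `c' > 1` with `P(Y-2 = k) ≤ c'(3ε)^{k-1}/(k+1)!` for all `k ≥ 2`, and
`E[e^{λ(Y-2)}] ≤ c' e^{λ} exp(3ε e^{λ})` for all `λ > 0`. -/
theorem degree_distribution_laplace_bound
    {Ω : Type*} [MeasurableSpace Ω] (μ : Measure Ω) [IsProbabilityMeasure μ]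
    (Y : Ω → ℝ) (hY : Measurable Y)
    (ε n c : ℝ) (hε0 : 0 < ε) (hε1 : ε < 1 / 3) (hn : 0 < n) (hc : 1 < c)
    (N₃' : ℝ) (N : ℕ → ℝ) (hNpos : ∀ k, 0 ≤ N k) (hN₃pos : 0 ≤ N₃')
    (hNk : ∀ k : ℕ, 4 ≤ k → N k ≤ c * (3 * ε) ^ k * n / (Nat.factorial k))
    (hN₃ : 3 * ε ^ 3 * n ≤ 3 * N₃')
    (hval : ∀ ω, Y ω = 3 ∨ ∃ k : ℕ, 4 ≤ k ∧ Y ω = k)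
    (hp3 : μ {ω | Y ω = 3}
      = ENNReal.ofReal (3 * N₃' /
          (3 * N₃' + ∑' j : ℕ, if 4 ≤ j then (j : ℝ) * N j else 0)))
    (hpk : ∀ k : ℕ, 4 ≤ k → μ {ω | Y ω = k}
      = ENNReal.ofReal ((k : ℝ) * N k /
          (3 * N₃' + ∑' j : ℕ, if 4 ≤ j then (j : ℝ) * N j else 0))) :
    ∃ c' : ℝ, 1 < c' ∧
      (∀ k : ℕ, 2 ≤ k →
        μ {ω | Y ω - 2 = k} ≤ ENNReal.ofReal (c' * (3 * ε) ^ (k - 1) / (Nat.factorial (k + 1)))) ∧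
      (∀ l : ℝ, 0 < l →
        ∫ ω, Real.exp (l * (Y ω - 2)) ∂μ ≤ c' * Real.exp l * Real.exp (3 * ε * Real.exp l)) := by
  set S := ∑' j : ℕ, if 4 ≤ j then (j : ℝ) * N j else 0 with hSdef
  have hSnn : 0 ≤ S := tsum_nonneg fun j => by
    split_ifs with h
    · exact mul_nonneg (Nat.cast_nonneg _) (hNpos _)
    · exact le_rfl
  set D := 3 * N₃' + S with hDdef
  have hDge : 3 * ε ^ 3 * n ≤ D := le_add_of_le_of_nonneg hN₃ hSnn
  have hεn : 0 < 3 * ε ^ 3 * n := by positivity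
  have hDpos : 0 < D := lt_of_lt_of_le hεn hDge
  -- the key real estimate
  have key : ∀ k : ℕ, 2 ≤ k →
      ((k : ℝ) + 2) * N (k + 2) / D ≤
        9 * c * (3 * ε) ^ (k - 1) / (Nat.factorial (k + 1)) := by
    intro k hk
    obtain ⟨m, rfl⟩ : ∃ m, k = m + 2 := ⟨k - 2, by omega⟩
    have hidx1 : m + 2 - 1 = m + 1 := by omega
    have hidx2 : m + 2 + 1 = m + 3 := by omega
    have hidx3 : m + 2 + 2 = m + 4 := by omega
    rw [hidx1, hidx2, hidx3]
    have hnum : ((m + 2 : ℕ) : ℝ) + 2 = (m : ℝ) + 4 := by push_cast; ring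
    rw [hnum]
    have h1 : N (m + 4) ≤ c * (3 * ε) ^ (m + 4) * n / (Nat.factorial (m + 4)) :=
      hNk _ (by omega)
    calc ((m : ℝ) + 4) * N (m + 4) / D
        ≤ ((m : ℝ) + 4) * (c * (3 * ε) ^ (m + 4) * n / (Nat.factorial (m + 4))) /
            (3 * ε ^ 3 * n) := by
          refine div_le_div₀ (by positivity) ?_ hεn hDge
          exact mul_le_mul_of_nonneg_left h1 (by positivity)
      _ = 9 * c * (3 * ε) ^ (m + 1) / (Nat.factorial (m + 3)) := by
          have hf : (Nat.factorial (m + 4) : ℝ) = ((m : ℝ) + 4) * (Nat.factorial (m + 3)) := by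
            have h4 : m + 4 = (m + 3) + 1 := by omega
            rw [h4, Nat.factorial_succ]
            push_cast
            ring
          have hpow : (3 * ε) ^ (m + 4) = (3 * ε) ^ (m + 1) * (27 * ε ^ 3) := by
            rw [show m + 4 = (m + 1) + 3 by omega, pow_add]
            ring
          have hfac : (0:ℝ) < (Nat.factorial (m + 3) : ℝ) := by
            exact_mod_cast Nat.factorial_pos _
          rw [hf, hpow]
          field_simp
          ring
  refine ⟨18 * c, by linarith, ?_, ?_⟩
  · -- pointwise probability bound
    intro k hk
    have hset : {ω | Y ω - 2 = (k : ℝ)} = {ω | Y ω = ((k + 2 : ℕ) : ℝ)} := by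
      ext ω
      simp only [Set.mem_setOf_eq]
      push_cast
      constructor <;> intro h <;> linarith
    rw [hset, hpk (k + 2) (by omega)]
    apply ENNReal.ofReal_le_ofReal
    have hkey := key k hk
    have hcast : ((k + 2 : ℕ) : ℝ) = (k : ℝ) + 2 := by push_cast; ring
    rw [hcast]
    refine hkey.trans ?_
    have hfac : (0:ℝ) < (Nat.factorial (k + 1) : ℝ) := by
      exact_mod_cast Nat.factorial_pos _
    have hnn : (0:ℝ) ≤ (3 * ε) ^ (k - 1) := by positivity
    exact div_le_div_of_nonneg_right (by nlinarith) hfac.le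
  · -- Laplace transform bound
    intro l hl
    set x := 3 * ε * Real.exp l with hxdef
    have hx0 : 0 < x := by positivity
    have hex1 : (1:ℝ) ≤ Real.exp x := Real.one_le_exp hx0.le
    have hg_meas : Measurable fun ω => Real.exp (l * (Y ω - 2)) :=
      (measurable_const.mul (hY.sub measurable_const)).exp
    rw [MeasureTheory.integral_eq_lintegral_of_nonneg_ae
      (ae_of_all _ fun ω => (Real.exp_pos _).le) hg_meas.aestronglyMeasurable]
    have hBnn : (0:ℝ) ≤ 18 * c * Real.exp l * Real.exp x := by positivity
    refine ENNReal.toReal_le_of_le_ofReal hBnn ?_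
    set A : ℕ → Set Ω := fun k => {ω | Y ω = (k : ℝ)} with hAdef
    have hAmeas : ∀ k, MeasurableSet (A k) := fun k => hY (measurableSet_singleton _)
    have hcover : (⋃ k, A k) = Set.univ := by
      ext ω
      simp only [Set.mem_iUnion, Set.mem_univ, iff_true, hAdef, Set.mem_setOf_eq]
      rcases hval ω with h | ⟨k, _, h⟩
      · exact ⟨3, by rw [h]; norm_num⟩
      · exact ⟨k, h⟩
    have hTk : ∀ k : ℕ, ∫⁻ ω in A k, ENNReal.ofReal (Real.exp (l * (Y ω - 2))) ∂μ
        = ENNReal.ofReal (Real.exp (l * ((k : ℝ) - 2))) * μ (A k) := by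
      intro k
      rw [setLIntegral_congr_fun_ae (hAmeas k)
        (ae_of_all _ fun ω (hω : Y ω = (k : ℝ)) => by rw [hω]),
        setLIntegral_const]
    have hempty : ∀ k : ℕ, k ≤ 2 → μ (A k) = 0 := by
      intro k hk
      have : A k = ∅ := by
        ext ω
        simp only [hAdef, Set.mem_setOf_eq, Set.mem_empty_iff_false, iff_false]
        intro h
        rcases hval ω with h3 | ⟨m, hm, hmv⟩
        · rw [h3] at h
          have : k = 3 := by exact_mod_cast h.symm
          omega
        · rw [hmv] at h
          have : k = m := by exact_mod_cast h.symm
          omega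
      rw [this, measure_empty]
    have hmain : ∫⁻ ω, ENNReal.ofReal (Real.exp (l * (Y ω - 2))) ∂μ
        ≤ ENNReal.ofReal (18 * c * Real.exp l * Real.exp x) := by
      calc ∫⁻ ω, ENNReal.ofReal (Real.exp (l * (Y ω - 2))) ∂μ
          = ∫⁻ ω in ⋃ k, A k, ENNReal.ofReal (Real.exp (l * (Y ω - 2))) ∂μ := by
            rw [hcover, setLIntegral_univ]
        _ ≤ ∑' k : ℕ, ∫⁻ ω in A k, ENNReal.ofReal (Real.exp (l * (Y ω - 2))) ∂μ :=
            lintegral_iUnion_le _ _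
        _ = ∑' k : ℕ, ENNReal.ofReal (Real.exp (l * ((k : ℝ) - 2))) * μ (A k) := by
            exact tsum_congr hTk
        _ ≤ ENNReal.ofReal (18 * c * Real.exp l * Real.exp x) := ?_
      set T : ℕ → ENNReal := fun k => ENNReal.ofReal (Real.exp (l * ((k : ℝ) - 2))) * μ (A k)
        with hTdef
      have hsplit : ∑' k, T k = (∑ k ∈ Finset.range 4, T k) + ∑' k, T (k + 4) :=
        (Summable.sum_add_tsum_nat_add' (k := 4) ENNReal.summable).symm
      rw [hsplit]
      have hhead : (∑ k ∈ Finset.range 4, T k) ≤ ENNReal.ofReal (Real.exp l) := by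
        have h0 : T 0 = 0 := by simp [hTdef, hempty 0 (by norm_num)]
        have h1 : T 1 = 0 := by simp [hTdef, hempty 1 (by norm_num)]
        have h2 : T 2 = 0 := by simp [hTdef, hempty 2 (by norm_num)]
        have h3 : T 3 ≤ ENNReal.ofReal (Real.exp l) := by
          have : T 3 = ENNReal.ofReal (Real.exp l) * μ (A 3) := by
            simp only [hTdef]
            norm_num
          rw [this]
          calc ENNReal.ofReal (Real.exp l) * μ (A 3)
              ≤ ENNReal.ofReal (Real.exp l) * 1 :=
                mul_le_mul_right prob_le_one _
            _ = ENNReal.ofReal (Real.exp l) := mul_one _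
        have : ∑ k ∈ Finset.range 4, T k = T 0 + T 1 + T 2 + T 3 := by
          rw [show (4:ℕ) = 3 + 1 from rfl, Finset.sum_range_succ, Finset.sum_range_succ,
            Finset.sum_range_succ, Finset.sum_range_one]
        rw [this, h0, h1, h2]
        simpa using h3
      have htail : (∑' k, T (k + 4)) ≤ ENNReal.ofReal (9 * c * Real.exp l * Real.exp x) := by
        have hterm : ∀ k : ℕ, T (k + 4)
            ≤ ENNReal.ofReal (9 * c * Real.exp l * (x ^ (k + 1) / (Nat.factorial (k + 1)))) := by
          intro k
          have hA4 : μ (A (k + 4)) ≤ ENNReal.ofReal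
              (9 * c * (3 * ε) ^ (k + 1) / (Nat.factorial (k + 3))) := by
            have := key (k + 2) (by omega)
            have hidx1 : k + 2 - 1 = k + 1 := by omega
            have hidx2 : k + 2 + 1 = k + 3 := by omega
            rw [hidx1, hidx2] at this
            have hμ : μ (A (k + 4)) = ENNReal.ofReal (((k + 4 : ℕ) : ℝ) * N (k + 4) / D) :=
              hpk (k + 4) (by omega)
            rw [hμ]
            apply ENNReal.ofReal_le_ofReal
            refine le_trans ?_ this
            have : k + 2 + 2 = k + 4 := by omega
            rw [this] at *
            push_cast
            apply le_of_eq
            ring_nf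
          have hEq : Real.exp (l * (((k + 4 : ℕ) : ℝ) - 2)) *
              (9 * c * (3 * ε) ^ (k + 1) / (Nat.factorial (k + 3)))
              = 9 * c * Real.exp l * (x ^ (k + 1) / (Nat.factorial (k + 3))) := by
            have he : Real.exp (l * (((k + 4 : ℕ) : ℝ) - 2)) =
                Real.exp l * (Real.exp l) ^ (k + 1) := by
              push_cast
              rw [← Real.exp_nat_mul]
              rw [← Real.exp_add]
              congr 1
              push_cast
              ring
            rw [he, hxdef]
            rw [mul_pow]
            ring
          have hle : 9 * c * Real.exp l * (x ^ (k + 1) / (Nat.factorial (k + 3)))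
              ≤ 9 * c * Real.exp l * (x ^ (k + 1) / (Nat.factorial (k + 1))) := by
            have hfle : (Nat.factorial (k + 1) : ℝ) ≤ (Nat.factorial (k + 3) : ℝ) := by
              exact_mod_cast Nat.factorial_le (by omega)
            have h1 : (0:ℝ) < (Nat.factorial (k + 1) : ℝ) := by
              exact_mod_cast Nat.factorial_pos _
            gcongr
          calc T (k + 4)
              = ENNReal.ofReal (Real.exp (l * (((k + 4 : ℕ) : ℝ) - 2))) * μ (A (k + 4)) := by
                simp only [hTdef]
            _ ≤ ENNReal.ofReal (Real.exp (l * (((k + 4 : ℕ) : ℝ) - 2))) *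
                ENNReal.ofReal (9 * c * (3 * ε) ^ (k + 1) / (Nat.factorial (k + 3))) :=
                mul_le_mul_right hA4 _
            _ = ENNReal.ofReal (Real.exp (l * (((k + 4 : ℕ) : ℝ) - 2)) *
                (9 * c * (3 * ε) ^ (k + 1) / (Nat.factorial (k + 3)))) := by
                rw [← ENNReal.ofReal_mul (Real.exp_pos _).le]
            _ ≤ _ := by
                rw [hEq]
                exact ENNReal.ofReal_le_ofReal hle
        refine le_trans (Summable.tsum_le_tsum hterm ENNReal.summable ENNReal.summable) ?_
        apply Summable.tsum_le_of_sum_le ENNReal.summable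
        intro s
        rw [← ENNReal.ofReal_sum_of_nonneg (fun i _ => by positivity)]
        apply ENNReal.ofReal_le_ofReal
        obtain ⟨m, hm⟩ := s.exists_nat_subset_range
        calc ∑ k ∈ s, 9 * c * Real.exp l * (x ^ (k + 1) / (Nat.factorial (k + 1)))
            ≤ ∑ k ∈ Finset.range m, 9 * c * Real.exp l * (x ^ (k + 1) / (Nat.factorial (k + 1))) :=
              Finset.sum_le_sum_of_subset_of_nonneg hm (fun i _ _ => by positivity)
          _ = 9 * c * Real.exp l * ∑ k ∈ Finset.range m, x ^ (k + 1) / (Nat.factorial (k + 1)) := by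
              rw [Finset.mul_sum]
          _ ≤ 9 * c * Real.exp l * Real.exp x := by
              gcongr
              have hsum : ∑ k ∈ Finset.range m, x ^ (k + 1) / (Nat.factorial (k + 1))
                  ≤ ∑ k ∈ Finset.range (m + 1), x ^ k / (Nat.factorial k) := by
                rw [Finset.sum_range_succ']
                simp only [Nat.factorial_zero, pow_zero, Nat.cast_one]
                norm_num
              exact hsum.trans (Real.sum_le_exp_of_nonneg hx0.le _)
          _ = 9 * c * Real.exp l * Real.exp x := rfl
      calc (∑ k ∈ Finset.range 4, T k) + ∑' k, T (k + 4)
          ≤ ENNReal.ofReal (Real.exp l) + ENNReal.ofReal (9 * c * Real.exp l * Real.exp x) :=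
            add_le_add hhead htail
        _ = ENNReal.ofReal (Real.exp l + 9 * c * Real.exp l * Real.exp x) := by
            rw [← ENNReal.ofReal_add (Real.exp_pos _).le (by positivity)]
        _ ≤ ENNReal.ofReal (18 * c * Real.exp l * Real.exp x) := by
            apply ENNReal.ofReal_le_ofReal
            have h9 : (1:ℝ) ≤ 9 * c * Real.exp x := by nlinarith
            have h10 := mul_le_mul_of_nonneg_left h9 (Real.exp_pos l).le
            nlinarith [h10]
    exact hmain
end
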